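/- arXiv:1703.03849 — 3 statements merged into one kernel-verified Lean document; each statement's English description precedes it below -/
import Mathlib

section
/- Let H = (V, E) be a hypergraph, k a positive integer, and e, e' ∈ E distinct edges. If γ_H(e) ≥ k (e is k-strong) and e' is k-weak (γ_H(e') < k), then γ_{H ∖ e'}(e) = γ_H(e); that is, deleting a k-weak edge does not change the strength of a k-strong edge. -/
/- A hypergraph on a finite vertex type `V` is given by a multiset `E` of edges,
each edge a `Finset V` (with at least 2 vertices, stated as a hypothesis). -/

variable {V : Type*} [Fintype V] [DecidableEq V]

/-- `δ_H(A)`: the (multiset of) edges of `E` crossing the cut `A`. -/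
def cutEdges (E : Multiset (Finset V)) (A : Finset V) : Multiset (Finset V) :=
  E.filter (fun e => (e ∩ A).Nonempty ∧ (e \ A).Nonempty)

/-- Edge multiset of the subhypergraph `H[U]` induced on `U`. -/
def induced (E : Multiset (Finset V)) (U : Finset V) : Multiset (Finset V) :=
  E.filter (fun e => e ⊆ U)

/-- Edge-connectivity `λ(H[U])`: the minimum number of edges of `H[U]` crossing a
nonempty proper subset `A ⊊ U`. -/
noncomputable def lam (E : Multiset (Finset V)) (U : Finset V) : ℕ :=
  sInf {k : ℕ | ∃ A : Finset V, A ⊆ U ∧ A.Nonempty ∧ A ≠ U ∧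
    k = Multiset.card (cutEdges (induced E U) A)}

/-- Strength `γ_H(e)`: the maximum of `λ(H[U])` over all `U` with `e ⊆ U ⊆ V`. -/
noncomputable def strength (E : Multiset (Finset V)) (e : Finset V) : ℕ :=
  (Finset.univ.powerset.filter (fun U => e ⊆ U)).sup (lam E)

/-- The graph on `V` joining two distinct vertices that lie in a common edge of `E`;
its connectivity notions are those of the hypergraph. -/
def toGraph (E : Multiset (Finset V)) : SimpleGraph V where
  Adj u v := u ≠ v ∧ ∃ e ∈ E, u ∈ e ∧ v ∈ e
  symm := by constructor; rintro u v ⟨h, e, he, hu, hv⟩; exact ⟨h.symm, e, he, hv, hu⟩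
  loopless := by constructor; rintro v ⟨h, -⟩; exact h rfl

/-- `κ(H)`: the number of connected components of the hypergraph. -/
noncomputable def kappa (E : Multiset (Finset V)) : ℕ :=
  Nat.card (toGraph E).ConnectedComponent

/-- The vertex map contracting the edge `e'` to its representative vertex `v0 ∈ e'`. -/
def contractMap (e' : Finset V) (v0 : V) : V → V := fun u => if u ∈ e' then v0 else u

/-- The hypergraph `H/e'` obtained by contracting the edge `e'` (to the representative
vertex `v0 ∈ e'`): edges contained in `e'` are removed, all other edges are replaced by
their image under the contraction. -/
def contract (E : Multiset (Finset V)) (e' : Finset V) (v0 : V) : Multiset (Finset V) :=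
  (E.filter (fun f => ¬ f ⊆ e')).map (fun f => f.image (contractMap e' v0))

/-- The degree of a vertex: the number of edges (with multiplicity) containing it. -/
def degree (E : Multiset (Finset V)) (v : V) : ℕ :=
  Multiset.card (E.filter (fun e => v ∈ e))

omit [Fintype V] in
lemma lam_mono {E' E : Multiset (Finset V)} (h : E' ≤ E) (U : Finset V) :
    lam E' U ≤ lam E U := by
  unfold lam
  by_cases hne : {k : ℕ | ∃ A : Finset V, A ⊆ U ∧ A.Nonempty ∧ A ≠ U ∧
      k = Multiset.card (cutEdges (induced E U) A)}.Nonempty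
  · obtain ⟨A, hAU, hA, hAne, hcard⟩ := Nat.sInf_mem hne
    calc sInf {k : ℕ | ∃ A : Finset V, A ⊆ U ∧ A.Nonempty ∧ A ≠ U ∧
          k = Multiset.card (cutEdges (induced E' U) A)}
        ≤ Multiset.card (cutEdges (induced E' U) A) :=
          Nat.sInf_le ⟨A, hAU, hA, hAne, rfl⟩
      _ ≤ _ := by
          rw [hcard]
          exact Multiset.card_le_card
            (Multiset.filter_le_filter _ (Multiset.filter_le_filter _ h))
  · have h' : ¬ {k : ℕ | ∃ A : Finset V, A ⊆ U ∧ A.Nonempty ∧ A ≠ U ∧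
        k = Multiset.card (cutEdges (induced E' U) A)}.Nonempty := by
      rintro ⟨x, A, hAU, hA, hAne, -⟩
      exact hne ⟨_, A, hAU, hA, hAne, rfl⟩
    rw [Set.not_nonempty_iff_eq_empty] at hne h'
    simp [hne, h']

/-- deleting a `k`-weak edge `e'` does not change the strength of a
`k`-strong edge `e`. -/
theorem strength_delete_weak_eq (E : Multiset (Finset V)) (hE : ∀ e ∈ E, 2 ≤ e.card)
    (k : ℕ) (hk : 0 < k) (e e' : Finset V) (he : e ∈ E) (he' : e' ∈ E) (hne : e ≠ e')
    (hstrong : k ≤ strength E e) (hweak : strength E e' < k) :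
    strength (E.erase e') e = strength E e := by
  apply le_antisymm
  · apply Finset.sup_le
    intro U hU
    exact le_trans (lam_mono (Multiset.erase_le _ _) U) (Finset.le_sup hU)
  · have hsne : (Finset.univ.powerset.filter (fun U => e ⊆ U)).Nonempty :=
      ⟨Finset.univ, by simp⟩
    obtain ⟨U, hU, hUe⟩ := Finset.exists_mem_eq_sup _ hsne (lam E)
    have hnotsub : ¬ e' ⊆ U := by
      intro hsub
      have hUmem : U ∈ Finset.univ.powerset.filter (fun W => e' ⊆ W) := by
        simp [hsub]
      have h1 : lam E U ≤ strength E e' := Finset.le_sup hUmem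
      unfold strength at hstrong
      rw [hUe] at hstrong
      omega
    have hind : induced (E.erase e') U = induced E U := by
      conv_rhs => rw [← Multiset.cons_erase he']
      unfold induced
      rw [Multiset.filter_cons_of_neg (p := fun f => f ⊆ U) _ hnotsub]
    have hlam : lam (E.erase e') U = lam E U := by
      unfold lam; rw [hind]
    calc strength E e = lam (E.erase e') U := by
          unfold strength; rw [hUe, hlam]
      _ ≤ strength (E.erase e') e := Finset.le_sup hU
end

section
/- For every hypergraph H = (V, E) on n vertices and every positive integer k, there exists a subset E' ⊆ E with |E'| ≤ k·(n − 1) that is a k-sparse certificate of H; that is, setting H' = (V, E'), for every A ⊆ V it holds that |δ_{H'}(A)| ≥ min(|δ_H(A)|, k). -/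
/- A hypergraph on a finite vertex type `V` is given by a multiset `E` of edges,
each edge a `Finset V` (with at least 2 vertices, stated as a hypothesis). -/

variable {V : Type*} [Fintype V] [DecidableEq V]

open Classical in
noncomputable def greedy : List (Finset V) → List (Finset V) × List (Finset V)
  | [] => ([], [])
  | e :: l =>
    let p := greedy l
    if ∃ u ∈ e, ∃ v ∈ e, ¬ (toGraph (↑p.1 : Multiset (Finset V))).Reachable u v
    then (e :: p.1, p.2) else (p.1, e :: p.2)

lemma toGraph_mono {E E' : Multiset (Finset V)} (h : E ≤ E') : toGraph E ≤ toGraph E' := by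
  rintro u v ⟨hne, e, he, hu, hv⟩
  exact ⟨hne, e, Multiset.subset_of_le h he, hu, hv⟩

lemma greedy_perm (l : List (Finset V)) : ((greedy l).1 ++ (greedy l).2).Perm l := by
  induction l with
  | nil => simp [greedy]
  | cons e l ih =>
    rw [greedy]
    split_ifs with h
    · simpa using ih.cons e
    · exact (List.perm_middle).trans (ih.cons e)

lemma greedy_rejected (l : List (Finset V)) :
    ∀ f ∈ (greedy l).2, ∀ u ∈ f, ∀ v ∈ f,
      (toGraph (↑(greedy l).1 : Multiset (Finset V))).Reachable u v := by
  induction l with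
  | nil => simp [greedy]
  | cons e l ih =>
    rw [greedy]
    split_ifs with h
    · intro f hf u hu v hv
      exact ((ih f hf u hu v hv).mono (toGraph_mono (List.sublist_cons_self e _).subperm))
    · intro f hf u hu v hv
      rcases List.mem_cons.1 hf with rfl | hf
      · push_neg at h
        exact h u hu v hv
      · exact ih f hf u hu v hv

lemma cross_of_reachable {E : Multiset (Finset V)} {u v : V} {A : Finset V}
    (h : (toGraph E).Reachable u v) (hu : u ∈ A) (hv : v ∉ A) :
    ∃ f ∈ E, (f ∩ A).Nonempty ∧ (f \ A).Nonempty := by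
  obtain ⟨w⟩ := h
  induction w with
  | nil => exact absurd hu hv
  | @cons a b c hab p ih =>
    by_cases hb : b ∈ A
    · exact ih hb hv
    · obtain ⟨-, f, hf, ha, hbf⟩ := hab
      exact ⟨f, hf, ⟨a, Finset.mem_inter.2 ⟨ha, hu⟩⟩, ⟨b, Finset.mem_sdiff.2 ⟨hbf, hb⟩⟩⟩

lemma toGraph_zero : toGraph (0 : Multiset (Finset V)) = ⊥ := by
  ext u v
  simp [toGraph]

lemma kappa_zero :
    Nat.card (SimpleGraph.ConnectedComponent (toGraph (0 : Multiset (Finset V))))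
    = Fintype.card V := by
  rw [toGraph_zero, ← Nat.card_eq_fintype_card]
  refine (Nat.card_eq_of_bijective (⊥ : SimpleGraph V).connectedComponentMk
    ⟨fun a b hab => SimpleGraph.reachable_bot.1 (SimpleGraph.ConnectedComponent.exact hab),
     fun C => C.exists_rep⟩).symm

lemma kappa_lt {F : List (Finset V)} {e : Finset V} {u v : V}
    (hu : u ∈ e) (hv : v ∈ e)
    (hr : ¬ (toGraph (↑F : Multiset (Finset V))).Reachable u v) :
    Nat.card (SimpleGraph.ConnectedComponent (toGraph (↑(e :: F) : Multiset (Finset V))))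
      < Nat.card (SimpleGraph.ConnectedComponent (toGraph (↑F : Multiset (Finset V)))) := by
  classical
  have hle : toGraph (↑F : Multiset (Finset V)) ≤ toGraph (↑(e :: F) : Multiset (Finset V)) :=
    toGraph_mono (List.sublist_cons_self e _).subperm
  have hne : u ≠ v := fun h => hr (h ▸ SimpleGraph.Reachable.refl u)
  letI : Fintype (SimpleGraph.ConnectedComponent (toGraph (↑F : Multiset (Finset V)))) :=
    Fintype.ofFinite _
  letI : Fintype (SimpleGraph.ConnectedComponent (toGraph (↑(e :: F) : Multiset (Finset V)))) :=
    Fintype.ofFinite _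
  rw [Nat.card_eq_fintype_card, Nat.card_eq_fintype_card]
  refine Fintype.card_lt_of_surjective_not_injective
    (SimpleGraph.ConnectedComponent.map (SimpleGraph.Hom.ofLE hle)) ?_ ?_
  · intro C
    obtain ⟨w, rfl⟩ := C.exists_rep
    exact ⟨(toGraph (↑F : Multiset (Finset V))).connectedComponentMk w, rfl⟩
  · intro hinj
    apply hr
    have h1 : (toGraph (↑(e :: F) : Multiset (Finset V))).Reachable u v := by
      refine SimpleGraph.Adj.reachable ⟨hne, e, ?_, hu, hv⟩
      simp
    have := hinj (a₁ := (toGraph (↑F : Multiset (Finset V))).connectedComponentMk u)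
      (a₂ := (toGraph (↑F : Multiset (Finset V))).connectedComponentMk v) (by
        simp only [SimpleGraph.ConnectedComponent.map_mk]
        exact SimpleGraph.ConnectedComponent.sound h1)
    exact SimpleGraph.ConnectedComponent.exact this

lemma greedy_invariant (l : List (Finset V)) :
    (greedy l).1.length
      + Nat.card (SimpleGraph.ConnectedComponent (toGraph (↑(greedy l).1 : Multiset (Finset V))))
      ≤ Fintype.card V := by
  induction l with
  | nil => simpa [greedy] using (kappa_zero (V := V)).le
  | cons e l ih =>
    rw [greedy]
    split_ifs with h
    · obtain ⟨u, hu, v, hv, hr⟩ := h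
      have hlt := kappa_lt (F := (greedy l).1) hu hv hr
      change (e :: (greedy l).1).length + Nat.card (SimpleGraph.ConnectedComponent
        (toGraph (↑(e :: (greedy l).1) : Multiset (Finset V)))) ≤ Fintype.card V
      rw [List.length_cons]
      set X := Nat.card (SimpleGraph.ConnectedComponent
        (toGraph (↑(e :: (greedy l).1) : Multiset (Finset V)))) with hX
      set Y := Nat.card (SimpleGraph.ConnectedComponent
        (toGraph (↑(greedy l).1 : Multiset (Finset V)))) with hY
      clear hX hY hr
      clear_value X Y
      linarith
    · exact ih

lemma greedy_len (l : List (Finset V)) :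
    (greedy l).1.length ≤ Fintype.card V - 1 := by
  have h := greedy_invariant l
  rcases isEmpty_or_nonempty V with hV | hV
  · exact le_trans (le_trans (Nat.le_add_right _ _) h) (by simp [Fintype.card_eq_zero])
  · haveI : Nonempty (SimpleGraph.ConnectedComponent
        (toGraph (↑(greedy l).1 : Multiset (Finset V)))) :=
      hV.map (toGraph (↑(greedy l).1 : Multiset (Finset V))).connectedComponentMk
    have h1 : 0 < Nat.card (SimpleGraph.ConnectedComponent
        (toGraph (↑(greedy l).1 : Multiset (Finset V)))) := Nat.card_pos
    exact Nat.le_sub_one_of_lt (lt_of_lt_of_le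
      (Nat.lt_add_of_pos_right h1) h)

noncomputable def rounds : ℕ → List (Finset V) → List (Finset V) × List (Finset V)
  | 0, l => ([], l)
  | k+1, l => ((greedy l).1 ++ (rounds k (greedy l).2).1, (rounds k (greedy l).2).2)

lemma rounds_perm (k : ℕ) (l : List (Finset V)) :
    ((rounds k l).1 ++ (rounds k l).2).Perm l := by
  induction k generalizing l with
  | zero => simp [rounds]
  | succ k ih =>
    rw [rounds, List.append_assoc]
    exact ((ih (greedy l).2).append_left _).trans (greedy_perm l)

lemma rounds_len (k : ℕ) (l : List (Finset V)) :
    (rounds k l).1.length ≤ k * (Fintype.card V - 1) := by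
  induction k generalizing l with
  | zero => simp [rounds]
  | succ k ih =>
    rw [rounds]
    have h1 := greedy_len l
    have h2 := ih (greedy l).2
    simp only [List.length_append, Nat.succ_mul]
    omega

lemma cutEdges_coe_append (F R : List (Finset V)) (A : Finset V) :
    cutEdges (↑(F ++ R) : Multiset (Finset V)) A = cutEdges ↑F A + cutEdges ↑R A := by
  simp [cutEdges, ← Multiset.coe_add, Multiset.filter_add]

lemma rounds_cut (A : Finset V) (k : ℕ) (l : List (Finset V))
    (h : ∃ f ∈ (rounds k l).2, (f ∩ A).Nonempty ∧ (f \ A).Nonempty) :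
    k ≤ Multiset.card (cutEdges (↑(rounds k l).1 : Multiset (Finset V)) A) :=
  by
  induction k generalizing l with
  | zero => exact Nat.zero_le _
  | succ k ih =>
    obtain ⟨f, hf, hfa⟩ := h
    have hfR : f ∈ (greedy l).2 :=
      (rounds_perm k (greedy l).2).subset (List.mem_append_right _ hf)
    obtain ⟨u, hu⟩ := hfa.1
    obtain ⟨v, hv⟩ := hfa.2
    rw [Finset.mem_inter] at hu
    rw [Finset.mem_sdiff] at hv
    have hreach := greedy_rejected l f hfR u hu.1 v hv.1
    obtain ⟨g, hg, hgA⟩ := cross_of_reachable hreach hu.2 hv.2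
    have h1 : 0 < Multiset.card (cutEdges (↑(greedy l).1 : Multiset (Finset V)) A) := by
      rw [Multiset.card_pos_iff_exists_mem]
      exact ⟨g, Multiset.mem_filter.2 ⟨hg, hgA⟩⟩
    have h2 := ih (greedy l).2 ⟨f, hf, hfa⟩
    rw [rounds, cutEdges_coe_append, Multiset.card_add]
    omega

/-- every hypergraph has a `k`-sparse certificate `E' ⊆ E` with at most
`k·(n-1)` edges: every cut of `H' = (V, E')` has value at least `min(|δ_H(A)|, k)`. -/
theorem sparse_certificate_exists (E : Multiset (Finset V))
    (hE : ∀ e ∈ E, 2 ≤ e.card) (k : ℕ) (hk : 0 < k) :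
    ∃ E' : Multiset (Finset V), E' ≤ E ∧
      Multiset.card E' ≤ k * (Fintype.card V - 1) ∧
      ∀ A : Finset V,
        min (Multiset.card (cutEdges E A)) k ≤ Multiset.card (cutEdges E' A) := by
  classical
  set F := (rounds k E.toList).1 with hF
  set R := (rounds k E.toList).2 with hR
  have key : (↑F : Multiset (Finset V)) + ↑R = E := by
    conv_rhs => rw [← Multiset.coe_toList E]
    rw [show ((↑F : Multiset (Finset V)) + ↑R) = ↑(F ++ R) from rfl]
    exact Quot.sound (rounds_perm k E.toList)
  refine ⟨↑F, ?_, ?_, ?_⟩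
  · rw [← key]; exact le_add_right le_rfl
  · simpa [Multiset.coe_card] using rounds_len k E.toList
  · intro A
    by_cases h : ∃ f ∈ R, (f ∩ A).Nonempty ∧ (f \ A).Nonempty
    · exact le_trans (min_le_right _ _) (rounds_cut A k E.toList h)
    · have hz : cutEdges (↑R : Multiset (Finset V)) A = 0 := by
        rw [cutEdges, Multiset.filter_eq_nil]
        intro f hf hfa
        exact h ⟨f, Multiset.mem_coe.1 hf, hfa⟩
      have hEq : Multiset.card (cutEdges E A)
          = Multiset.card (cutEdges (↑F : Multiset (Finset V)) A) := by
        rw [← key, cutEdges, Multiset.filter_add, Multiset.card_add, ← cutEdges, ← cutEdges,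
          hz, Multiset.card_zero, Nat.add_zero]
      exact hEq ▸ min_le_left _ _
end

section
/- For n ≥ 3, let H be the hypergraph on vertices {v_1, …, v_n} whose edges are e = {v_1, v_2} together with the edges {v_1, v_2, v_i} for 3 ≤ i ≤ n, and let G be the multigraph obtained from H by keeping e and replacing each edge {v_1, v_2, v_i} by the star centered at v_1 spanning its vertices, i.e., by the two parallel-counted edges {v_1, v_2} and {v_1, v_i}. Then γ_H(e) = 1 while γ_G(e) = n − 1; that is, replacing hyperedges by stars can distort edge strength by a factor of n − 1 even for rank-3 hypergraphs. -/
/- A hypergraph on a finite vertex type `V` is given by a multiset `E` of edges,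
each edge a `Finset V` (with at least 2 vertices, stated as a hypothesis). -/

variable {V : Type*} [Fintype V] [DecidableEq V]

/-! ### Auxiliary lemmas -/

lemma lam_le_card (E : Multiset (Finset V)) (U A : Finset V) (hA : A ⊆ U)
    (h1 : A.Nonempty) (h2 : A ≠ U) :
    lam E U ≤ Multiset.card (cutEdges (induced E U) A) :=
  Nat.sInf_le ⟨A, hA, h1, h2, rfl⟩

lemma subset_pair_cases {u v : V} {A : Finset V}
    (hA : A ⊆ ({u, v} : Finset V)) (hne : A.Nonempty) (hp : A ≠ ({u, v} : Finset V)) :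
    A = {u} ∨ A = {v} := by
  by_cases hu : u ∈ A <;> by_cases hv : v ∈ A
  · exact absurd (Finset.Subset.antisymm hA
      (Finset.insert_subset hu (Finset.singleton_subset_iff.2 hv))) hp
  · left
    apply Finset.Subset.antisymm
    · intro x hx
      rcases Finset.mem_insert.1 (hA hx) with h | h
      · simp [h]
      · rw [Finset.mem_singleton] at h; subst h; exact absurd hx hv
    · simpa using hu
  · right
    apply Finset.Subset.antisymm
    · intro x hx
      rcases Finset.mem_insert.1 (hA hx) with h | h
      · subst h; exact absurd hx hu
      · simp [h]
    · simpa using hv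
  · obtain ⟨a, ha⟩ := hne
    rcases Finset.mem_insert.1 (hA ha) with h | h
    · subst h; exact absurd ha hu
    · rw [Finset.mem_singleton] at h; subst h; exact absurd ha hv

lemma lam_pair (E : Multiset (Finset V)) {u v : V} (huv : u ≠ v) (c : ℕ)
    (h : ∀ A : Finset V, (A = {u} ∨ A = {v}) →
      Multiset.card (cutEdges (induced E ({u, v} : Finset V)) A) = c) :
    lam E ({u, v} : Finset V) = c := by
  have hu : ({u} : Finset V) ≠ ({u, v} : Finset V) := by
    intro hh
    have hv : v ∈ ({u} : Finset V) := by rw [hh]; simp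
    exact huv.symm (Finset.mem_singleton.1 hv)
  have hSne : {k : ℕ | ∃ A : Finset V, A ⊆ ({u, v} : Finset V) ∧ A.Nonempty ∧
      A ≠ ({u, v} : Finset V) ∧
      k = Multiset.card (cutEdges (induced E ({u, v} : Finset V)) A)}.Nonempty :=
    ⟨_, {u}, by simp, ⟨u, by simp⟩, hu, rfl⟩
  obtain ⟨A, hA, hne, hp, hk⟩ := Nat.sInf_mem hSne
  have : lam E ({u, v} : Finset V)
      = Multiset.card (cutEdges (induced E ({u, v} : Finset V)) A) := hk
  rw [this, h A (subset_pair_cases hA hne hp)]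

lemma cut_le_filter (E : Multiset (Finset V)) (U : Finset V) (i : V) :
    Multiset.card (cutEdges (induced E U) (U.erase i)) ≤
      Multiset.card (E.filter (fun f => i ∈ f)) := by
  apply Multiset.card_le_card
  unfold cutEdges induced
  rw [Multiset.filter_filter]
  apply Multiset.monotone_filter_right
  rintro e ⟨⟨-, x, hx⟩, hsub⟩
  rw [Finset.mem_sdiff] at hx
  obtain ⟨hxe, hxA⟩ := hx
  have hxU : x ∈ U := hsub hxe
  have : x = i := by
    by_contra hxi
    exact hxA (Finset.mem_erase.2 ⟨hxi, hxU⟩)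
  rwa [this] at hxe

lemma lam_le_one_of (E : Multiset (Finset V)) {U : Finset V} {i w : V}
    (hiU : i ∈ U) (hwU : w ∈ U) (hwi : w ≠ i)
    (hcard : Multiset.card (E.filter (fun f => i ∈ f)) ≤ 1) :
    lam E U ≤ 1 := by
  have hA : U.erase i ⊆ U := Finset.erase_subset _ _
  have h1 : (U.erase i).Nonempty := ⟨w, Finset.mem_erase.2 ⟨hwi, hwU⟩⟩
  have h2 : U.erase i ≠ U := by
    intro h
    rw [← h] at hiU
    exact Finset.notMem_erase i U hiU
  exact le_trans (le_trans (lam_le_card E U _ hA h1 h2) (cut_le_filter E U i)) hcard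

lemma bind_pair {α : Type*} (s : Multiset α) (p q : α → Finset V) :
    (s.bind (fun i => ({p i, q i} : Multiset (Finset V)))) = s.map p + s.map q := by
  induction s using Multiset.induction with
  | empty => simp
  | cons a s ih =>
    have hpq : ({p a, q a} : Multiset (Finset V)) = {p a} + {q a} := by
      rw [Multiset.insert_eq_cons, ← Multiset.singleton_add]
    rw [Multiset.cons_bind, ih, Multiset.map_cons, Multiset.map_cons, hpq,
      ← Multiset.singleton_add (p a), ← Multiset.singleton_add (q a)]
    abel

/-- for `n ≥ 3`, the hypergraph `H` on `{v_0, …, v_{n-1}}` with the edge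
`e = {v₀, v₁}` together with the edges `{v₀, v₁, vᵢ}` for `2 ≤ i ≤ n-1` has
`γ_H(e) = 1`, whereas the multigraph `G` obtained by replacing each `{v₀, v₁, vᵢ}`
with the star centered at `v₀` (the two edges `{v₀, v₁}` and `{v₀, vᵢ}`) has
`γ_G(e) = n - 1`. -/
theorem star_replacement_distorts_strength (n : ℕ) (hn : 3 ≤ n)
    (v0 v1 : Fin n) (hv0 : (v0 : ℕ) = 0) (hv1 : (v1 : ℕ) = 1)
    (H G : Multiset (Finset (Fin n)))
    (hH : H = ({v0, v1} : Finset (Fin n)) ::ₘ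
      ((Finset.univ.filter (fun i : Fin n => 2 ≤ (i : ℕ))).val.map
        (fun i => ({v0, v1, i} : Finset (Fin n)))))
    (hG : G = ({v0, v1} : Finset (Fin n)) ::ₘ
      ((Finset.univ.filter (fun i : Fin n => 2 ≤ (i : ℕ))).val.bind
        (fun i => {({v0, v1} : Finset (Fin n)), ({v0, i} : Finset (Fin n))}))) :
    strength H {v0, v1} = 1 ∧ strength G {v0, v1} = n - 1 := by
  have hne01 : v0 ≠ v1 := by
    intro h
    rw [Fin.ext_iff, hv0, hv1] at h
    exact absurd h (by norm_num)
  set m := (Finset.univ.filter (fun i : Fin n => 2 ≤ (i : ℕ))).val with hm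
  have hmem : ∀ i : Fin n, i ∈ m ↔ 2 ≤ (i : ℕ) := fun i => by
    rw [hm]; simp [Finset.mem_filter]
  have hne0 : ∀ i ∈ m, i ≠ v0 := by
    intro i hi h
    have h2 := (hmem i).1 hi
    rw [h, hv0] at h2
    omega
  have hne1 : ∀ i ∈ m, i ≠ v1 := by
    intro i hi h
    have h2 := (hmem i).1 hi
    rw [h, hv1] at h2
    omega
  have hclass : ∀ i : Fin n, i ≠ v0 → i ≠ v1 → i ∈ m := by
    intro i h0 h1
    apply (hmem i).2
    by_contra h
    push_neg at h
    have : (i : ℕ) = 0 ∨ (i : ℕ) = 1 := by omega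
    rcases this with h | h
    · exact h0 (Fin.ext (by omega))
    · exact h1 (Fin.ext (by omega))
  have hnodup : m.Nodup := (Finset.univ.filter (fun i : Fin n => 2 ≤ (i : ℕ))).nodup
  have hcardm : Multiset.card m = n - 2 := by
    have hsplit := Finset.card_filter_add_card_filter_not
      (s := (Finset.univ : Finset (Fin n))) (p := fun i : Fin n => 2 ≤ (i : ℕ))
    have hneg : Finset.univ.filter (fun i : Fin n => ¬ 2 ≤ (i : ℕ)) = {v0, v1} := by
      ext i
      simp only [Finset.mem_filter, Finset.mem_univ, true_and, Finset.mem_insert,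
        Finset.mem_singleton, not_le]
      constructor
      · intro h
        have : (i : ℕ) = 0 ∨ (i : ℕ) = 1 := by omega
        rcases this with h | h
        · exact Or.inl (Fin.ext (by omega))
        · exact Or.inr (Fin.ext (by omega))
      · rintro (rfl | rfl) <;> omega
    rw [hneg] at hsplit
    have hc2 : ({v0, v1} : Finset (Fin n)).card = 2 := by
      rw [Finset.card_insert_of_notMem (by simpa using hne01), Finset.card_singleton]
    have hcm : Multiset.card m
        = (Finset.univ.filter (fun i : Fin n => 2 ≤ (i : ℕ))).card := rfl
    simp only [Finset.card_univ, Fintype.card_fin, hc2] at hsplit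
    omega
  -- H computations
  have hHind : induced H ({v0, v1} : Finset (Fin n)) = {({v0, v1} : Finset (Fin n))} := by
    rw [hH]
    unfold induced
    rw [Multiset.filter_cons, if_pos (Finset.Subset.refl _), Multiset.filter_map]
    have h0 : Multiset.filter
        ((fun e : Finset (Fin n) => e ⊆ ({v0, v1} : Finset (Fin n)))
          ∘ fun i => ({v0, v1, i} : Finset (Fin n))) m = 0 := by
      rw [Multiset.filter_eq_nil]
      intro j hj hsub
      have : j ∈ ({v0, v1} : Finset (Fin n)) := hsub (by simp)
      rcases Finset.mem_insert.1 this with h | h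
      · exact hne0 j hj h
      · exact hne1 j hj (Finset.mem_singleton.1 h)
    rw [h0]
    simp
  have hcutH : ∀ A : Finset (Fin n), (A = {v0} ∨ A = {v1}) →
      Multiset.card (cutEdges (induced H {v0, v1}) A) = 1 := by
    intro A hA
    have hpred : ((({v0, v1} : Finset (Fin n)) ∩ A).Nonempty ∧
        (({v0, v1} : Finset (Fin n)) \ A).Nonempty) := by
      rcases hA with rfl | rfl
      · exact ⟨⟨v0, by simp⟩, ⟨v1, by simp [Finset.mem_sdiff, hne01.symm]⟩⟩
      · exact ⟨⟨v1, by simp⟩, ⟨v0, by simp [Finset.mem_sdiff, hne01]⟩⟩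
    rw [hHind]
    unfold cutEdges
    rw [Multiset.filter_singleton, if_pos hpred]
    simp
  have hlamH : lam H ({v0, v1} : Finset (Fin n)) = 1 := lam_pair H hne01 1 hcutH
  have hdegH : ∀ i ∈ m, Multiset.card (H.filter (fun f => i ∈ f)) ≤ 1 := by
    intro i hi
    rw [hH, Multiset.filter_cons, Multiset.filter_map]
    have hif : ¬ (fun f : Finset (Fin n) => i ∈ f) ({v0, v1} : Finset (Fin n)) := by
      simp [hne0 i hi, hne1 i hi]
    rw [if_neg hif, zero_add, Multiset.card_map]
    have h2 : Multiset.filter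
        ((fun f : Finset (Fin n) => i ∈ f) ∘ fun j => ({v0, v1, j} : Finset (Fin n))) m
        ≤ Multiset.filter (· = i) m := by
      apply Multiset.monotone_filter_right
      intro j hj
      simp only [Function.comp, Finset.mem_insert, Finset.mem_singleton] at hj
      rcases hj with h | h | h
      · exact absurd h (hne0 i hi)
      · exact absurd h (hne1 i hi)
      · exact h.symm
    have h3 := Multiset.card_le_card h2
    rw [Multiset.filter_eq', Multiset.card_replicate] at h3
    exact le_trans h3 (Multiset.nodup_iff_count_le_one.1 hnodup i)
  -- G computations
  have hG' : G = ({v0, v1} : Finset (Fin n)) ::ₘ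
      (m.map (fun _ => ({v0, v1} : Finset (Fin n)))
        + m.map (fun i => ({v0, i} : Finset (Fin n)))) := by
    rw [hG, bind_pair]
  have hGind : induced G ({v0, v1} : Finset (Fin n))
      = ({v0, v1} : Finset (Fin n)) ::ₘ m.map (fun _ => ({v0, v1} : Finset (Fin n))) := by
    rw [hG']
    unfold induced
    rw [Multiset.filter_cons, if_pos (Finset.Subset.refl _), Multiset.filter_add,
      Multiset.filter_map, Multiset.filter_map]
    have h1 : Multiset.filter
        ((fun e : Finset (Fin n) => e ⊆ ({v0, v1} : Finset (Fin n)))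
          ∘ fun _ => ({v0, v1} : Finset (Fin n))) m = m :=
      Multiset.filter_eq_self.2 (fun a _ => Finset.Subset.refl _)
    have h2 : Multiset.filter
        ((fun e : Finset (Fin n) => e ⊆ ({v0, v1} : Finset (Fin n)))
          ∘ fun i => ({v0, i} : Finset (Fin n))) m = 0 := by
      rw [Multiset.filter_eq_nil]
      intro j hj hsub
      have : j ∈ ({v0, v1} : Finset (Fin n)) := hsub (by simp)
      rcases Finset.mem_insert.1 this with h | h
      · exact hne0 j hj h
      · exact hne1 j hj (Finset.mem_singleton.1 h)
    rw [h1, h2]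
    simp [Multiset.singleton_add]
  have hcutG : ∀ A : Finset (Fin n), (A = {v0} ∨ A = {v1}) →
      Multiset.card (cutEdges (induced G {v0, v1}) A) = n - 1 := by
    intro A hA
    have hpred : ((({v0, v1} : Finset (Fin n)) ∩ A).Nonempty ∧
        (({v0, v1} : Finset (Fin n)) \ A).Nonempty) := by
      rcases hA with rfl | rfl
      · exact ⟨⟨v0, by simp⟩, ⟨v1, by simp [Finset.mem_sdiff, hne01.symm]⟩⟩
      · exact ⟨⟨v1, by simp⟩, ⟨v0, by simp [Finset.mem_sdiff, hne01]⟩⟩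
    rw [hGind]
    unfold cutEdges
    rw [Multiset.filter_cons, if_pos hpred, Multiset.filter_map]
    have h1 : Multiset.filter
        ((fun e : Finset (Fin n) => (e ∩ A).Nonempty ∧ (e \ A).Nonempty)
          ∘ fun _ => ({v0, v1} : Finset (Fin n))) m = m :=
      Multiset.filter_eq_self.2 (fun a _ => hpred)
    rw [h1]
    simp only [Multiset.card_add, Multiset.card_singleton, Multiset.card_map, hcardm]
    omega
  have hlamG : lam G ({v0, v1} : Finset (Fin n)) = n - 1 := lam_pair G hne01 (n - 1) hcutG
  have hdegG : ∀ i ∈ m, Multiset.card (G.filter (fun f => i ∈ f)) ≤ 1 := by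
    intro i hi
    rw [hG', Multiset.filter_cons, Multiset.filter_add, Multiset.filter_map,
      Multiset.filter_map]
    have hif : ¬ (fun f : Finset (Fin n) => i ∈ f) ({v0, v1} : Finset (Fin n)) := by
      simp [hne0 i hi, hne1 i hi]
    have h1 : Multiset.filter
        ((fun f : Finset (Fin n) => i ∈ f) ∘ fun _ => ({v0, v1} : Finset (Fin n))) m = 0 :=
      Multiset.filter_eq_nil.2 (fun a _ => hif)
    rw [if_neg hif, h1, Multiset.map_zero, zero_add, zero_add, Multiset.card_map]
    have h2 : Multiset.filter
        ((fun f : Finset (Fin n) => i ∈ f) ∘ fun j => ({v0, j} : Finset (Fin n))) m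
        ≤ Multiset.filter (· = i) m := by
      apply Multiset.monotone_filter_right
      intro j hj
      simp only [Function.comp, Finset.mem_insert, Finset.mem_singleton] at hj
      rcases hj with h | h
      · exact absurd h (hne0 i hi)
      · exact h.symm
    have h3 := Multiset.card_le_card h2
    rw [Multiset.filter_eq', Multiset.card_replicate] at h3
    exact le_trans h3 (Multiset.nodup_iff_count_le_one.1 hnodup i)
  -- assembling
  have hbig : ∀ (E : Multiset (Finset (Fin n))),
      (∀ i ∈ m, Multiset.card (E.filter (fun f => i ∈ f)) ≤ 1) →
      ∀ U : Finset (Fin n), ({v0, v1} : Finset (Fin n)) ⊆ U →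
      U ≠ ({v0, v1} : Finset (Fin n)) → lam E U ≤ 1 := by
    intro E hdeg U hU hUe
    obtain ⟨i, hiU, hinotin⟩ := Finset.exists_of_ssubset (lt_of_le_of_ne hU (Ne.symm hUe))
    have hi0 : i ≠ v0 := fun h => hinotin (by simp [h])
    have hi1 : i ≠ v1 := fun h => hinotin (by simp [h])
    have him := hclass i hi0 hi1
    have hv0U : v0 ∈ U := hU (by simp)
    exact lam_le_one_of E hiU hv0U (Ne.symm hi0) (hdeg i him)
  have hmemU : ({v0, v1} : Finset (Fin n)) ∈
      Finset.univ.powerset.filter (fun U => ({v0, v1} : Finset (Fin n)) ⊆ U) := by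
    simp
  constructor
  · apply le_antisymm
    · apply Finset.sup_le
      intro U hU
      simp only [Finset.mem_filter, Finset.mem_powerset] at hU
      by_cases hUe : U = ({v0, v1} : Finset (Fin n))
      · rw [hUe, hlamH]
      · exact hbig H hdegH U hU.2 hUe
    · calc 1 = lam H ({v0, v1} : Finset (Fin n)) := hlamH.symm
        _ ≤ _ := Finset.le_sup hmemU
  · apply le_antisymm
    · apply Finset.sup_le
      intro U hU
      simp only [Finset.mem_filter, Finset.mem_powerset] at hU
      by_cases hUe : U = ({v0, v1} : Finset (Fin n))
      · rw [hUe, hlamG]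
      · exact le_trans (hbig G hdegG U hU.2 hUe) (by omega)
    · calc n - 1 = lam G ({v0, v1} : Finset (Fin n)) := hlamG.symm
        _ ≤ _ := Finset.le_sup hmemU
end
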